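/- Consider S = {1, 2, 3, …} ∪ {∞} with kernel A_{ij} = 1/i - 1/j if j ≤ i and j < ∞, A_{1∞} = -1, and A_{ij} = -∞ otherwise (using 1/∞ = 0). With basepoint ∞, the Martin kernel is K_{ij} = 1/i if j ≤ i, and K_{ij} = 1/i - 2 otherwise. -/

import Mathlib

open Filter Topology
open scoped Classical

noncomputable section

variable {S : Type*}

/-- Weight of the path `i :: p ++ [j]` (length ≥ 1): sum of the kernel values along edges. -/
def pathWeight (A : S → S → EReal) : S → List S → S → EReal
  | i, [], j => A i j
  | i, k :: l, j => A i k + pathWeight A k l j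

/-- Max-plus kernel `A⁺`: sup of weights of paths of length at least one. -/
def Aplus (A : S → S → EReal) (i j : S) : EReal :=
  ⨆ p : List S, pathWeight A i p j

/-- Max-plus Green kernel `A*`: also allows the empty path (weight 0) when `i = j`. -/
def Astar (A : S → S → EReal) (i j : S) : EReal :=
  if i = j then Aplus A i j ⊔ 0 else Aplus A i j

/-- `1/i` on `ℕ₊ ∪ {∞}`, with `1/∞ = 0`. -/
def inv13 (i : WithTop ℕ+) : ℝ :=
  WithTop.recTopCoe 0 (fun n : ℕ+ => 1 / (n : ℝ)) i

/-- The kernel on `S = ℕ₊ ∪ {∞}`: `A i j = 1/i - 1/j` if `j ≤ i` and `j < ∞`,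
`A 1 ∞ = -1`, and `-∞` otherwise. -/
def A13 : WithTop ℕ+ → WithTop ℕ+ → EReal := fun i j =>
  if j ≤ i ∧ j ≠ ⊤ then ((inv13 i - inv13 j : ℝ) : EReal)
  else if i = ((1 : ℕ+) : WithTop ℕ+) ∧ j = ⊤ then (-1 : EReal)
  else ⊥

lemma inv13_nonneg (i : WithTop ℕ+) : 0 ≤ inv13 i := by
  induction i using WithTop.recTopCoe with
  | top => simp [inv13]
  | coe n => simp only [inv13, WithTop.recTopCoe_coe]; positivity

lemma inv13_le_one (i : WithTop ℕ+) : inv13 i ≤ 1 := by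
  induction i using WithTop.recTopCoe with
  | top => simp [inv13]
  | coe n =>
    simp only [inv13, WithTop.recTopCoe_coe]
    rw [div_le_one (by positivity)]
    exact_mod_cast n.one_le

lemma inv13_anti {i j : WithTop ℕ+} (h : i ≤ j) : inv13 j ≤ inv13 i := by
  induction j using WithTop.recTopCoe with
  | top => exact inv13_nonneg i
  | coe n =>
    induction i using WithTop.recTopCoe with
    | top => simp at h
    | coe m =>
      simp only [inv13, WithTop.recTopCoe_coe]
      have : (m:ℝ) ≤ n := by exact_mod_cast WithTop.coe_le_coe.mp h
      exact one_div_le_one_div_of_le (by exact_mod_cast m.pos) this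

lemma one_le13 (i : WithTop ℕ+) : ((1:ℕ+) : WithTop ℕ+) ≤ i := by
  induction i using WithTop.recTopCoe with
  | top => exact le_top
  | coe n => exact WithTop.coe_le_coe.mpr n.one_le

lemma inv13_one : inv13 ((1:ℕ+) : WithTop ℕ+) = 1 := by
  rw [show inv13 ((1:ℕ+) : WithTop ℕ+) = 1/((1:ℕ+):ℝ) from rfl]; norm_num

lemma inv13_top : inv13 (⊤ : WithTop ℕ+) = 0 := rfl

/-- Value of `Aplus A13`. -/
def B13 (i j : WithTop ℕ+) : ℝ :=
  inv13 i - inv13 j - (if j ≤ i ∧ j ≠ ⊤ then 0 else 2)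

lemma A13_le_B13 (i j : WithTop ℕ+) : A13 i j ≤ (B13 i j : EReal) := by
  unfold A13 B13
  split_ifs with h1 h2
  · exact le_of_eq (by norm_num)
  · obtain ⟨hi, hj⟩ := h2
    subst hi; subst hj
    rw [show (-1:EReal) = ((-1:ℝ):EReal) by norm_num, EReal.coe_le_coe_iff]
    rw [inv13_one, inv13_top]; norm_num
  · exact bot_le

lemma step13 (i k j : WithTop ℕ+) :
    A13 i k + (B13 k j : EReal) ≤ (B13 i j : EReal) := by
  unfold A13
  split_ifs with h1 h2
  · rw [← EReal.coe_add, EReal.coe_le_coe_iff]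
    unfold B13
    by_cases hjk : j ≤ k ∧ j ≠ ⊤
    · have hji : j ≤ i ∧ j ≠ ⊤ := ⟨hjk.1.trans h1.1, hjk.2⟩
      simp only [if_pos hjk, if_pos hji]; linarith
    · rw [if_neg hjk]
      split_ifs <;> linarith
  · obtain ⟨hi, hk⟩ := h2
    subst hi; subst hk
    rw [show (-1:EReal) = ((-1:ℝ):EReal) by norm_num, ← EReal.coe_add,
      EReal.coe_le_coe_iff]
    unfold B13
    have h0 := inv13_nonneg j
    have h1 := inv13_le_one j
    rw [inv13_one, inv13_top]
    split_ifs <;> linarith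
  · simp

lemma pathWeight_le_B13 (j : WithTop ℕ+) :
    ∀ (p : List (WithTop ℕ+)) (i : WithTop ℕ+),
      pathWeight A13 i p j ≤ (B13 i j : EReal) := by
  intro p
  induction p with
  | nil => intro i; exact A13_le_B13 i j
  | cons k l ih =>
    intro i
    calc pathWeight A13 i (k :: l) j = A13 i k + pathWeight A13 k l j := rfl
      _ ≤ A13 i k + (B13 k j : EReal) := add_le_add_right (ih k) _
      _ ≤ (B13 i j : EReal) := step13 i k j

lemma Aplus13_eq (i j : WithTop ℕ+) : Aplus A13 i j = (B13 i j : EReal) := by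
  refine le_antisymm (iSup_le fun p => pathWeight_le_B13 j p i) ?_
  by_cases hj : j ≤ i ∧ j ≠ ⊤
  · refine le_trans (le_of_eq ?_) (le_iSup _ ([] : List (WithTop ℕ+)))
    show (B13 i j : EReal) = A13 i j
    unfold A13 B13
    rw [if_pos hj, if_pos hj]
    norm_num
  · -- A13 i 1 is always the direct edge with weight inv13 i - 1
    have hA1 : A13 i ((1:ℕ+) : WithTop ℕ+) = ((inv13 i - 1 : ℝ) : EReal) := by
      unfold A13
      rw [if_pos ⟨one_le13 i, by simp⟩, inv13_one]
    have hAtop : A13 ((1:ℕ+) : WithTop ℕ+) ⊤ = ((-1 : ℝ) : EReal) := by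
      unfold A13
      rw [if_neg (by simp), if_pos ⟨rfl, rfl⟩]
      norm_num
    by_cases hjt : j = ⊤
    · subst hjt
      refine le_trans (le_of_eq ?_) (le_iSup _ ([((1:ℕ+) : WithTop ℕ+)]))
      show (B13 i ⊤ : EReal) = A13 i _ + A13 _ ⊤
      rw [hA1, hAtop, ← EReal.coe_add, EReal.coe_eq_coe_iff]
      unfold B13
      rw [if_neg (by simp), inv13_top]
      ring
    · have hji : ¬ j ≤ i := fun h => hj ⟨h, hjt⟩
      have hAtopj : A13 ⊤ j = ((-inv13 j : ℝ) : EReal) := by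
        unfold A13
        rw [if_pos ⟨le_top, hjt⟩, inv13_top]
        norm_num
      refine le_trans (le_of_eq ?_) (le_iSup _ ([((1:ℕ+) : WithTop ℕ+), ⊤]))
      show (B13 i j : EReal) = A13 i _ + (A13 _ ⊤ + A13 ⊤ j)
      rw [hA1, hAtop, hAtopj, ← EReal.coe_add, ← EReal.coe_add, EReal.coe_eq_coe_iff]
      unfold B13
      rw [if_neg hj]
      ring

lemma Astar13_eq (i j : WithTop ℕ+) :
    Astar A13 i j = ((if i = j then 0 else B13 i j : ℝ) : EReal) := by
  unfold Astar
  by_cases hij : i = j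
  · subst hij
    rw [if_pos rfl, if_pos rfl, Aplus13_eq]
    refine sup_eq_right.2 (EReal.coe_nonpos.2 ?_)
    unfold B13
    split_ifs <;> linarith
  · rw [if_neg hij, if_neg hij, Aplus13_eq]

theorem martin_kernel_A13 :
    ∀ i j : WithTop ℕ+,
      Astar A13 i j - Astar A13 ⊤ j =
        if j ≤ i then ((inv13 i : ℝ) : EReal) else ((inv13 i - 2 : ℝ) : EReal) := by
  intro i j
  rw [Astar13_eq, Astar13_eq, ← EReal.coe_sub]
  by_cases hji : j ≤ i
  · rw [if_pos hji, EReal.coe_eq_coe_iff]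
    by_cases hij : i = j
    · subst hij
      rw [if_pos rfl]
      by_cases hit : i = ⊤
      · subst hit; rw [if_pos rfl, inv13_top]; norm_num
      · rw [if_neg (Ne.symm hit)]
        unfold B13
        rw [if_pos ⟨le_top, hit⟩, inv13_top]
        ring
    · have hjt : j ≠ ⊤ := by
        rintro rfl
        exact hij (top_le_iff.mp hji)
      rw [if_neg hij, if_neg (fun h => hjt h.symm)]
      unfold B13
      rw [if_pos ⟨hji, hjt⟩, if_pos ⟨le_top, hjt⟩, inv13_top]
      ring
  · have hij : i ≠ j := fun h => hji (le_of_eq h.symm)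
    rw [if_neg hji, EReal.coe_eq_coe_iff, if_neg hij]
    by_cases hjt : j = ⊤
    · rw [if_pos hjt.symm]
      subst hjt
      unfold B13
      rw [if_neg (fun h => hji h.1), inv13_top]
      ring
    · rw [if_neg (fun h => hjt h.symm)]
      unfold B13
      rw [if_neg (fun h => hji h.1), if_pos ⟨le_top, hjt⟩, inv13_top]
      ring
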